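/- arXiv:1410.5152 — 3 statements merged into one kernel-verified Lean document; each statement's English description precedes it below -/
import Mathlib

section
/- Any community rule that satisfies the World Community axiom and the Embedding axiom must satisfy the Clique property: if every member of S ranks all members of S ahead of all non-members, then S is a community. -/
/-- A preference (linear order) on `W`, given as a ranking bijection; `u ≻_π v` iff `π u < π v`. -/
abbrev Pref (W : Type) [Fintype W] : Type := W ≃ Fin (Fintype.card W)

/-- A community rule: for every (finite) ground set and preference profile on it, a
collection of subsets (its communities). -/
def Rule : Type 1 :=
  ∀ (W : Type) [Fintype W] [DecidableEq W], (W → Pref W) → Finset W → Prop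

/-- World Community axiom: the whole (nonempty) ground set is always a community. -/
def RWC (C : Rule) : Prop :=
  ∀ (W : Type) [Fintype W] [DecidableEq W] [Nonempty W] (P : W → Pref W),
    C W P Finset.univ

/-- Embedding axiom: if `(W', P')` is embedded into `(W, P)` in such a way that the ranks
agree on `W'` (i.e. `π_i(j) = π'_i(j)` for all `i, j ∈ W'`, so members of `W'` occupy the
top `|W'|` positions in each other's preferences), then the communities of the larger
network contained in `W'` are exactly the communities of the smaller one. -/
def REmb (C : Rule) : Prop :=
  ∀ (W : Type) [Fintype W] [DecidableEq W] (W' : Finset W)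
    (P : W → Pref W) (P' : ↥W' → Pref ↥W'),
    (∀ i j : ↥W', ((P i.1 j.1 : Fin (Fintype.card W)) : ℕ)
        = ((P' i j : Fin (Fintype.card ↥W')) : ℕ)) →
    ∀ S : Finset W, S ⊆ W' →
      (C W P S ↔ C ↥W' P' (S.subtype (· ∈ W')))

/-- any community rule satisfying World Community and Embedding satisfies the
Clique property: if every member of a nonempty `S` ranks all members of `S` ahead of all
non-members, then `S` is a community. -/
theorem stmt_5 (C : Rule) (hWC : RWC C) (hEmb : REmb C) :
    ∀ (W : Type) [Fintype W] [DecidableEq W] (P : W → Pref W) (S : Finset W),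
      S.Nonempty →
      (∀ s ∈ S, ∀ u ∈ S, ∀ v ∉ S, P s u < P s v) →
      C W P S := by
  intro W _ _ P S hne hclique
  -- ranks of members of S are below |S|
  have hlt : ∀ i : ↥S, ∀ j : ↥S, ((P i.1 j.1 : Fin (Fintype.card W)) : ℕ) < Fintype.card ↥S := by
    intro i j
    have hsub : Finset.univ.filter (fun k => P i.1 k ≤ P i.1 j.1) ⊆ S := by
      intro k hk
      simp only [Finset.mem_filter, Finset.mem_univ, true_and] at hk
      by_contra hkS
      exact absurd (hclique i.1 i.2 j.1 j.2 k hkS) (not_lt.mpr hk)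
    have hcard : (Finset.univ.filter (fun k => P i.1 k ≤ P i.1 j.1)).card
        = ((P i.1 j.1 : Fin (Fintype.card W)) : ℕ) + 1 := by
      have : (Finset.univ.filter (fun k => P i.1 k ≤ P i.1 j.1)).card
          = (Finset.univ.filter (fun r : Fin (Fintype.card W) => r ≤ P i.1 j.1)).card := by
        apply Finset.card_bij (fun k _ => P i.1 k)
        · intro k hk; simpa using (Finset.mem_filter.mp hk).2
        · intro a _ b _ h; exact (P i.1).injective h
        · intro r hr
          refine ⟨(P i.1).symm r, ?_, by simp⟩
          simp only [Finset.mem_filter, Finset.mem_univ, true_and, Equiv.apply_symm_apply]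
          simpa using (Finset.mem_filter.mp hr).2
      rw [this]
      have : Finset.univ.filter (fun r : Fin (Fintype.card W) => r ≤ P i.1 j.1)
          = Finset.Iic (P i.1 j.1) := by
        ext r; simp
      rw [this, Fin.card_Iic]
    have h1 : ((P i.1 j.1 : Fin (Fintype.card W)) : ℕ) + 1 ≤ S.card := by
      rw [← hcard]; exact Finset.card_le_card hsub
    have : S.card = Fintype.card ↥S := (Fintype.card_coe S).symm
    omega
  -- the restricted preference profile
  let f : ↥S → ↥S → Fin (Fintype.card ↥S) :=
    fun i j => ⟨((P i.1 j.1 : Fin (Fintype.card W)) : ℕ), hlt i j⟩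
  have hfinj : ∀ i, Function.Injective (f i) := by
    intro i a b hab
    have h2 := congrArg Fin.val hab
    simp only [f] at h2
    have : ((P i.1 a.1 : Fin (Fintype.card W)) : ℕ) = ((P i.1 b.1 : Fin (Fintype.card W)) : ℕ) := h2
    exact Subtype.ext ((P i.1).injective (Fin.ext this))
  have hfbij : ∀ i, Function.Bijective (f i) := fun i =>
    (Fintype.bijective_iff_injective_and_card (f i)).mpr ⟨hfinj i, by simp⟩
  let P' : ↥S → Pref ↥S := fun i => Equiv.ofBijective (f i) (hfbij i)
  have hagree : ∀ i j : ↥S, ((P i.1 j.1 : Fin (Fintype.card W)) : ℕ)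
      = ((P' i j : Fin (Fintype.card ↥S)) : ℕ) := by
    intro i j; rfl
  have hiff := hEmb W S P P' hagree S (le_refl S)
  have hsubty : S.subtype (· ∈ S) = Finset.univ := by
    ext ⟨x, hx⟩; simp [Finset.mem_subtype, hx]
  rw [hiff, hsubty]
  haveI : Nonempty ↥S := ⟨⟨hne.choose, hne.choose_spec⟩⟩
  exact hWC ↥S P'
end

section
/- A community rule that satisfies the Monotonicity and Embedding axioms must satisfy the Outsider Departure property: if S ∈ C(V,Π) and v ∉ S, then S ∈ C(V−{v}, Π|_{V−{v}}). -/
noncomputable def extEquiv {W : Type} [Fintype W] [DecidableEq W] (v : W)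
    (e : ↥({v}ᶜ : Finset W) ≃ Fin (Fintype.card ↥({v}ᶜ : Finset W))) :
    W ≃ Fin (Fintype.card ↥({v}ᶜ : Finset W) + 1) where
  toFun w := if h : w = v then Fin.last _ else (e ⟨w, by simp [h]⟩).castSucc
  invFun i := if h : i = Fin.last _ then v else ((e.symm (i.castPred h)) : W)
  left_inv w := by
    by_cases h : w = v
    · simp [h]
    · have hlast : (e ⟨w, by simp [h]⟩).castSucc ≠ Fin.last _ :=
        Fin.ne_last_of_lt (Fin.castSucc_lt_last _)
      simp only [dif_neg h, dif_neg hlast]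
      simp
  right_inv i := by
    by_cases h : i = Fin.last _
    · simp [h]
    · have hne : ((e.symm (i.castPred h)) : W) ≠ v := by
        have h2 := (e.symm (i.castPred h)).2
        rw [Finset.mem_compl, Finset.mem_singleton] at h2
        exact h2
      simp only [dif_neg h, dif_neg hne]
      simp [Subtype.coe_eta]

theorem extEquiv_ne {W : Type} [Fintype W] [DecidableEq W] (v : W)
    (e : ↥({v}ᶜ : Finset W) ≃ Fin (Fintype.card ↥({v}ᶜ : Finset W)))
    (w : W) (h : w ≠ v) :
    ((extEquiv v e w : Fin _) : ℕ) = ((e ⟨w, by simp [h]⟩ : Fin _) : ℕ) := by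
  simp [extEquiv, h]

theorem extEquiv_v {W : Type} [Fintype W] [DecidableEq W] (v : W)
    (e : ↥({v}ᶜ : Finset W) ≃ Fin (Fintype.card ↥({v}ᶜ : Finset W))) :
    ((extEquiv v e v : Fin _) : ℕ) = Fintype.card ↥({v}ᶜ : Finset W) := by
  simp [extEquiv]

/-- Monotonicity axiom. -/
def RMon (C : Rule) : Prop :=
  ∀ (W : Type) [Fintype W] [DecidableEq W] (S : Finset W) (P P' : W → Pref W),
    (∀ s ∈ S, ∀ u ∈ S, ∀ v : W, P' s u < P' s v → P s u < P s v) →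
    C W P' S → C W P S

/-- a community rule satisfying Monotonicity and Embedding satisfies Outsider
Departure: if `S ∈ C(V, P)` and `v ∉ S`, then `S ∈ C(V − {v}, P|_{V−{v}})`, where the
restricted profile keeps the relative order of the remaining members. -/
theorem stmt_7 (C : Rule) (hMon : RMon C) (hEmb : REmb C) :
    ∀ (W : Type) [Fintype W] [DecidableEq W] (P : W → Pref W) (S : Finset W) (v : W),
      v ∉ S → C W P S →
      ∀ P' : ↥({v}ᶜ : Finset W) → Pref ↥({v}ᶜ : Finset W),
        (∀ s u w : ↥({v}ᶜ : Finset W), P' s u < P' s w ↔ P s.1 u.1 < P s.1 w.1) →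
        C ↥({v}ᶜ : Finset W) P' (S.subtype (· ∈ ({v}ᶜ : Finset W))) := by
  intro W _ _ P S v hv hCS P' hP'
  classical
  have hvmem : ∀ w : W, w ∈ ({v}ᶜ : Finset W) ↔ w ≠ v := by
    intro w; simp
  have hcard : Fintype.card W = Fintype.card ↥({v}ᶜ : Finset W) + 1 := by
    have h1 : Fintype.card ↥({v}ᶜ : Finset W) = ({v}ᶜ : Finset W).card :=
      Fintype.card_coe _
    have h2 : ({v}ᶜ : Finset W).card = Fintype.card W - 1 := by
      rw [Finset.card_compl, Finset.card_singleton]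
    have h3 : 1 ≤ Fintype.card W := Fintype.card_pos_iff.mpr ⟨v⟩
    omega
  set n := Fintype.card ↥({v}ᶜ : Finset W) with hn
  let Q : W → Pref W := fun s =>
    if hs : s = v then P s
    else (extEquiv v (P' ⟨s, (hvmem s).mpr hs⟩)).trans (finCongr hcard.symm)
  have hQval : ∀ (s : W) (hs : s ≠ v) (w : W) (hw : w ≠ v),
      ((Q s w : Fin (Fintype.card W)) : ℕ)
        = ((P' ⟨s, (hvmem s).mpr hs⟩ ⟨w, (hvmem w).mpr hw⟩ : Fin n) : ℕ) := by
    intro s hs w hw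
    rw [show Q s = (extEquiv v (P' ⟨s, (hvmem s).mpr hs⟩)).trans (finCongr hcard.symm)
      from dif_neg hs]
    rw [Equiv.trans_apply, finCongr_apply, Fin.coe_cast]
    exact extEquiv_ne v _ w hw
  have hQv : ∀ (s : W) (hs : s ≠ v), ((Q s v : Fin (Fintype.card W)) : ℕ) = n := by
    intro s hs
    rw [show Q s = (extEquiv v (P' ⟨s, (hvmem s).mpr hs⟩)).trans (finCongr hcard.symm)
      from dif_neg hs]
    rw [Equiv.trans_apply, finCongr_apply, Fin.coe_cast]
    exact extEquiv_v v _
  have hCQ : C W Q S := by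
    refine hMon W S Q P ?_ hCS
    intro s hsS u huS w hlt
    have hs : s ≠ v := fun h => hv (h ▸ hsS)
    have hu : u ≠ v := fun h => hv (h ▸ huS)
    rw [Fin.lt_def]
    by_cases hw : w = v
    · subst hw
      rw [hQv s hs, hQval s hs u hu]
      exact (P' _ _).isLt
    · rw [hQval s hs u hu, hQval s hs w hw]
      have := (hP' ⟨s, (hvmem s).mpr hs⟩ ⟨u, (hvmem u).mpr hu⟩ ⟨w, (hvmem w).mpr hw⟩).mpr hlt
      exact this
  have hagree : ∀ i j : ↥({v}ᶜ : Finset W),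
      ((Q i.1 j.1 : Fin (Fintype.card W)) : ℕ) = ((P' i j : Fin n) : ℕ) := by
    intro i j
    have hi : i.1 ≠ v := (hvmem i.1).mp i.2
    have hj : j.1 ≠ v := (hvmem j.1).mp j.2
    rw [hQval i.1 hi j.1 hj]
  have hSsub : S ⊆ ({v}ᶜ : Finset W) := by
    intro x hx
    exact (hvmem x).mpr (fun h => hv (h ▸ hx))
  exact (hEmb W ({v}ᶜ : Finset W) Q P' hagree S hSsub).mp hCQ
end

section
/- The family of community rules satisfying the six axioms Anonymity, Monotonicity, Coherence Robustness of Members, Coherence Robustness of Non-Members, World Community, and Embedding is closed under pointwise intersection and pointwise union of community rules: if C₁ and C₂ satisfy these axioms, so do C₁∩C₂ and C₁∪C₂ (defined by (C₁∩C₂)(A) = C₁(A)∩C₂(A) and (C₁∪C₂)(A) = C₁(A)∪C₂(A)). -/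
/-- Anonymity axiom: relabeling the members by a permutation `σ` (acting both on the
indexing of preferences and on the candidates) maps communities to communities. -/
def RAnon (C : Rule) : Prop :=
  ∀ (W : Type) [Fintype W] [DecidableEq W]
    (P : W → Pref W) (σ : Equiv.Perm W) (S : Finset W),
    C W P S ↔ C W (fun s => ((σ.symm : W ≃ W).trans (P (σ.symm s)))) (S.image σ)

/-- Coherence Robustness of Members: if under `P'` all members of `S` agree on their
relative order of the members and the positions of non-members are unchanged from `P`,
then `S ∈ C(P')` implies `S ∈ C(P)`. -/
def RCRM (C : Rule) : Prop :=
  ∀ (W : Type) [Fintype W] [DecidableEq W] (S : Finset W) (P P' : W → Pref W),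
    (∀ s ∈ S, ∀ t ∈ S, ∀ u ∈ S, ∀ w ∈ S, (P' s u < P' s w ↔ P' t u < P' t w)) →
    (∀ s ∈ S, ∀ v ∉ S, P' s v = P s v) →
    C W P' S → C W P S

/-- Coherence Robustness of Non-Members: if under `P'` all members of `S` agree on their
relative order of the non-members and the positions of members are unchanged from `P`,
then `S ∈ C(P')` implies `S ∈ C(P)`. -/
def RCRNM (C : Rule) : Prop :=
  ∀ (W : Type) [Fintype W] [DecidableEq W] (S : Finset W) (P P' : W → Pref W),
    (∀ s ∈ S, ∀ t ∈ S, ∀ v ∉ S, ∀ w ∉ S, (P' s v < P' s w ↔ P' t v < P' t w)) →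
    (∀ s ∈ S, ∀ u ∈ S, P' s u = P s u) →
    C W P' S → C W P S

/-- A rule satisfying the six axioms `A`, `Mon`, `CRM`, `CRNM`, `WC`, `Emb`. -/
def GoodRule (C : Rule) : Prop :=
  RAnon C ∧ RMon C ∧ RCRM C ∧ RCRNM C ∧ RWC C ∧ REmb C

/-- Pointwise intersection of two community rules. -/
def interRule (C₁ C₂ : Rule) : Rule :=
  fun W _ _ P S => C₁ W P S ∧ C₂ W P S

/-- Pointwise union of two community rules. -/
def unionRule (C₁ C₂ : Rule) : Rule :=
  fun W _ _ P S => C₁ W P S ∨ C₂ W P S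

/-- the family of community rules satisfying the six axioms Anonymity,
Monotonicity, CRM, CRNM, World Community, and Embedding is closed under pointwise
intersection and pointwise union. -/
theorem stmt_16 (C₁ C₂ : Rule) (h₁ : GoodRule C₁) (h₂ : GoodRule C₂) :
    GoodRule (interRule C₁ C₂) ∧ GoodRule (unionRule C₁ C₂) := by
  obtain ⟨a₁, m₁, cm₁, cn₁, w₁, e₁⟩ := h₁
  obtain ⟨a₂, m₂, cm₂, cn₂, w₂, e₂⟩ := h₂
  constructor <;>
  refine ⟨?_, ?_, ?_, ?_, ?_, ?_⟩
  · intro W _ _ P σ S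
    exact and_congr (a₁ W P σ S) (a₂ W P σ S)
  · intro W _ _ S P P' h hp
    exact ⟨m₁ W S P P' h hp.1, m₂ W S P P' h hp.2⟩
  · intro W _ _ S P P' h h' hp
    exact ⟨cm₁ W S P P' h h' hp.1, cm₂ W S P P' h h' hp.2⟩
  · intro W _ _ S P P' h h' hp
    exact ⟨cn₁ W S P P' h h' hp.1, cn₂ W S P P' h h' hp.2⟩
  · intro W _ _ _ P
    exact ⟨w₁ W P, w₂ W P⟩
  · intro W _ _ W' P P' h S hS
    exact and_congr (e₁ W W' P P' h S hS) (e₂ W W' P P' h S hS)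
  · intro W _ _ P σ S
    exact or_congr (a₁ W P σ S) (a₂ W P σ S)
  · intro W _ _ S P P' h hp
    exact hp.imp (m₁ W S P P' h) (m₂ W S P P' h)
  · intro W _ _ S P P' h h' hp
    exact hp.imp (cm₁ W S P P' h h') (cm₂ W S P P' h h')
  · intro W _ _ S P P' h h' hp
    exact hp.imp (cn₁ W S P P' h h') (cn₂ W S P P' h h')
  · intro W _ _ _ P
    exact Or.inl (w₁ W P)
  · intro W _ _ W' P P' h S hS
    exact or_congr (e₁ W W' P P' h S hS) (e₂ W W' P P' h S hS)
end
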